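/- Suppose q and q+2 are both odd prime powers, let α, β be primitive elements of F_q and F_{q+2}, and let G = F_q × F_{q+2}. Then D' = E'_1 ∪ E'_2 ∪ E_3 is a (4m−1, 2m−1, m−1) difference set in G with m = (q+1)²/4, where E'_1 = {(α^{2i}, β^{2j+1})}, E'_2 = {(α^{2i+1}, β^{2j})} for i = 0,...,(q−3)/2, j = 0,...,(q−1)/2, and E_3 = {(0,0)} ∪ {(α^i, 0) : i = 0,...,q−2}. -/

import Mathlib

open Finset

/-- A (v,k,λ) difference set in an additive group G: a k-subset D such that every
nonzero g has exactly λ representations g = d₁ - d₂ with d₁,d₂ ∈ D. -/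
def IsAddDiffSet {G : Type*} [AddGroup G] [DecidableEq G] (v k lam : ℕ)
    (D : Finset G) : Prop :=
  D.card = k ∧ ∀ g : G, g ≠ 0 →
    ((D ×ˢ D).filter (fun p => p.1 - p.2 = g)).card = lam

/-- An n-dimensional (v,k,λ) difference set in an additive group G. -/
def IsAddDiffSetN {G : Type*} [AddGroup G] [DecidableEq G] (n v k lam : ℕ)
    (D : Finset (Fin n → G)) : Prop :=
  D.card = k ∧ ∀ x y : Fin n, x < y →
    IsAddDiffSet v k lam (D.image (fun d => d x - d y))

section TPPHelpers

variable {K : Type*} [Field K] [Fintype K] [DecidableEq K]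

local notation "χ" => quadraticChar K

/-- indicator of nonzero, as an integer -/
def indNZ (x : K) : ℤ := if x = 0 then 0 else 1

/-- twice the indicator of zero, as an integer -/
def aI (y : K) : ℤ := if y = 0 then 2 else 0

lemma sum_chi_shift (hK : ringChar K ≠ 2) (a : K) : ∑ x : K, χ (x + a) = 0 := by
  rw [← quadraticChar_sum_zero hK]
  exact Fintype.sum_equiv (Equiv.addRight a) _ _ (fun x => rfl)

lemma sum_indNZ_chi (hK : ringChar K ≠ 2) (a : K) :
    ∑ x : K, indNZ x * χ (x + a) = -χ a := by
  have h : ∀ x : K, indNZ x * χ (x + a) = χ (x + a) - (if x = 0 then χ a else 0) := by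
    intro x
    by_cases hx : x = 0 <;> simp [indNZ, hx]
  rw [Finset.sum_congr rfl (fun x _ => h x), Finset.sum_sub_distrib, sum_chi_shift hK,
    Finset.sum_ite_eq' Finset.univ (0 : K) (fun _ => χ a)]
  simp

lemma sum_chi_indNZ (hK : ringChar K ≠ 2) (a : K) :
    ∑ x : K, χ x * indNZ (x + a) = -χ (-a) := by
  have h : ∀ x : K, χ x * indNZ (x + a) = χ x - (if x = -a then χ (-a) else 0) := by
    intro x
    by_cases hx : x = -a <;> simp [indNZ, hx, add_eq_zero_iff_eq_neg]
  rw [Finset.sum_congr rfl (fun x _ => h x), Finset.sum_sub_distrib, quadraticChar_sum_zero hK,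
    Finset.sum_ite_eq' Finset.univ (-a : K) (fun _ => χ (-a))]
  simp

lemma sum_indNZ_indNZ (a : K) :
    ∑ x : K, indNZ x * indNZ (x + a) =
      (Fintype.card K : ℤ) - 2 + (if a = 0 then 1 else 0) := by
  have h : ∀ x : K, indNZ x * indNZ (x + a) =
      1 - (if x = 0 then 1 else 0) - (if x = -a then 1 else 0)
        + (if x = 0 then 1 else 0) * (if x = -a then 1 else 0) := by
    intro x
    by_cases hx : x = 0 <;> by_cases hx' : x = -a <;>
      simp [indNZ, hx, hx', add_eq_zero_iff_eq_neg]
  rw [Finset.sum_congr rfl (fun x _ => h x)]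
  simp only [Finset.sum_add_distrib, Finset.sum_sub_distrib]
  rw [Finset.sum_ite_eq' Finset.univ (0 : K) (fun _ => (1:ℤ)),
    Finset.sum_ite_eq' Finset.univ (-a : K) (fun _ => (1:ℤ))]
  have h3 : ∑ x : K, (if x = 0 then (
1:ℤ) else 0) * (if x = -a then 1 else 0)
      = if a = 0 then 1 else 0 := by
    have h2 : ∀ x : K, (if x = 0 then (1:ℤ) else 0) * (if x = -a then 1 else 0)
        = if x = 0 then (if a = 0 then (1:ℤ) else 0) else 0 := by
      intro x
      by_cases hx : x = 0
      · subst hx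
        by_cases ha : a = 0 <;> simp [ha, eq_comm, neg_eq_zero]
      · simp [hx]
    rw [Finset.sum_congr rfl (fun x _ => h2 x),
      Finset.sum_ite_eq' Finset.univ (0 : K) (fun _ => if a = 0 then (1:ℤ) else 0)]
    simp
  rw [h3]
  simp [Finset.card_univ]
  ring

lemma sum_chi_chi (hK : ringChar K ≠ 2) (a : K) :
    ∑ x : K, χ x * χ (x + a) = if a = 0 then (Fintype.card K : ℤ) - 1 else -1 := by
  by_cases ha : a = 0
  · subst ha
    simp only [add_zero, if_true]
    have h : ∀ x : K, χ x * χ x = 1 - (if x = 0 then 1 else 0) := by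
      intro x
      by_cases hx : x = 0
      · simp [hx]
      · rcases quadraticChar_dichotomy hx with h | h <;> simp [h, hx]
    rw [Finset.sum_congr rfl (fun x _ => h x), Finset.sum_sub_distrib,
      Finset.sum_ite_eq' Finset.univ (0 : K) (fun _ => (1:ℤ))]
    simp [Finset.card_univ]
  · rw [if_neg ha]
    have key : ∀ x : K, x ≠ 0 → χ x * χ (x + a) = χ (1 + a * x⁻¹) := by
      intro x hx
      have hxx : x + a = x * (1 + a * x⁻¹) := by field_simp
      rw [hxx, map_mul, ← mul_assoc, ← map_mul, show x * x = x ^ 2 by ring,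
        quadraticChar_sq_one' hx, one_mul]
    have split : ∑ x : K, χ x * χ (x + a)
        = ∑ x ∈ Finset.univ.filter (fun x : K => x ≠ 0), χ (1 + a * x⁻¹) := by
      rw [← Finset.sum_filter_add_sum_filter_not Finset.univ (fun x : K => x ≠ 0)]
      have h1 : ∑ x ∈ Finset.univ.filter (fun x : K => ¬x ≠ 0), χ x * χ (x + a) = 0 := by
        apply Finset.sum_eq_zero
        intro x hx
        simp only [Finset.mem_filter, not_not] at hx
        simp [hx.2]
      rw [h1, add_zero]
      exact Finset.sum_congr rfl (fun x hx => key x (Finset.mem_filter.mp hx).2)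
    rw [split]
    have htrans : ∑ x ∈ Finset.univ.filter (fun x : K => x ≠ 0), χ (1 + a * x⁻¹)
        = ∑ w ∈ Finset.univ.filter (fun w : K => w ≠ 1), χ w := by
      apply Finset.sum_nbij' (i := fun x => 1 + a * x⁻¹) (j := fun w => a * (w - 1)⁻¹)
      · intro x hx
        simp only [Finset.mem_filter, Finset.mem_univ, true_and] at hx ⊢
        intro hcon
        have : a * x⁻¹ = 0 := by linear_combination hcon
        rcases mul_eq_zero.mp this with h | h
        · exact ha h
        · exact hx (inv_eq_zero.mp h)
      · intro w hw
        simp only [Finset.mem_filter, Finset.mem_univ, true_and] at hw ⊢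
        intro hcon
        rcases mul_eq_zero.mp hcon with h | h
        · exact ha h
        · exact hw (by
            have h3 : w - 1 = 0 := by
              by_contra hne
              exact (inv_ne_zero hne) h
            rwa [sub_eq_zero] at h3)
      · intro x hx
        simp only [Finset.mem_filter, Finset.mem_univ, true_and] at hx
        field_simp
        simp [ha]
      · intro w hw
        simp only [Finset.mem_filter, Finset.mem_univ, true_and] at hw
        have h1 : w - 1 ≠ 0 := sub_ne_zero.mpr hw
        field_simp
        ring
      · intro x hx
        rfl
    rw [htrans]
    have hz := quadraticChar_sum_zero hK
    rw [Finset.filter_ne' Finset.univ (1 : K)]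
    have h2 := Finset.add_sum_erase Finset.univ χ (Finset.mem_univ (1 : K))
    have h1 : χ 1 = 1 := by simp
    rw [h1] at h2
    linarith

lemma sum_aI_mul (f : K → ℤ) (b : K) : ∑ y : K, aI y * f (y + b) = 2 * f b := by
  have h : ∀ y : K, aI y * f (y + b) = if y = 0 then 2 * f b else 0 := by
    intro y
    by_cases hy : y = 0 <;> simp [aI, hy]
  rw [Finset.sum_congr rfl (fun y _ => h y), Finset.sum_ite_eq' Finset.univ (0 : K)]
  simp

lemma sum_mul_aI (f : K → ℤ) (b : K) : ∑ y : K, f y * aI (y + b) = 2 * f (-b) := by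
  have h : ∀ y : K, f y * aI (y + b) = if y = -b then 2 * f (-b) else 0 := by
    intro y
    by_cases hy : y = -b
    · subst hy; simp [aI, mul_comm]
    · have : y + b ≠ 0 := fun hc => hy (by linear_combination hc)
      simp [aI, this, hy]
  rw [Finset.sum_congr rfl (fun y _ => h y), Finset.sum_ite_eq' Finset.univ (-b : K)]
  simp

lemma sum_indNZ_shift (a : K) : ∑ x : K, indNZ (x + a) = (Fintype.card K : ℤ) - 1 := by
  have h : ∀ x : K, indNZ (x + a) = 1 - (if x = -a then 1 else 0) := by
    intro x
    by_cases hx : x = -a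
    · subst hx; simp [indNZ]
    · have : x + a ≠ 0 := fun hc => hx (by linear_combination hc)
      simp [indNZ, this, hx]
  rw [Finset.sum_congr rfl (fun x _ => h x), Finset.sum_sub_distrib,
    Finset.sum_ite_eq' Finset.univ (-a : K) (fun _ => (1:ℤ))]
  simp [Finset.card_univ]

lemma sum_indNZ_self : ∑ x : K, indNZ x = (Fintype.card K : ℤ) - 1 := by
  have := sum_indNZ_shift (0 : K)
  simpa using this

lemma sum_aI_self : ∑ y : K, aI y = 2 := by
  have h : ∀ y : K, aI y = if y = 0 then (2:ℤ) else 0 := fun y => rfl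
  rw [Finset.sum_congr rfl (fun y _ => h y),
    Finset.sum_ite_eq' Finset.univ (0 : K) (fun _ => (2:ℤ))]
  simp

lemma pow_reduce (γ : K) {d : ℕ} (h1 : γ ^ d = 1) (m : ℕ) :
    γ ^ m = γ ^ (m % d) := by
  conv_lhs => rw [← Nat.div_add_mod m d, pow_add, pow_mul, h1, one_pow, one_mul]

lemma gen_ne_zero (hK : ringChar K ≠ 2) (γ : K) (hγ : ∀ x : K, x ≠ 0 → ∃ m : ℕ, γ ^ m = x) :
    γ ≠ 0 := by
  obtain ⟨c, hc⟩ := quadraticChar_exists_neg_one hK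
  have hc0 : c ≠ 0 := by
    intro h; rw [h, quadraticChar_zero] at hc; norm_num at hc
  obtain ⟨m, hm⟩ := hγ c hc0
  intro h0
  subst h0
  rcases Nat.eq_zero_or_pos m with hm0 | hm0
  · rw [hm0, pow_zero] at hm
    rw [← hm] at hc; simp at hc
  · rw [zero_pow hm0.ne'] at hm
    exact hc0 hm.symm

lemma chi_gen (hK : ringChar K ≠ 2) (γ : K) (hγ : ∀ x : K, x ≠ 0 → ∃ m : ℕ, γ ^ m = x) :
    χ γ = -1 := by
  have hγ0 := gen_ne_zero hK γ hγ
  rcases quadraticChar_dichotomy hγ0 with h | h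
  · exfalso
    obtain ⟨c, hc⟩ := quadraticChar_exists_neg_one hK
    have hc0 : c ≠ 0 := by
      intro h'; rw [h', quadraticChar_zero] at hc; norm_num at hc
    obtain ⟨m, hm⟩ := hγ c hc0
    rw [← hm, map_pow, h, one_pow] at hc
    norm_num at hc
  · exact h

lemma mem_image_even (hK : ringChar K ≠ 2) (γ : K)
    (hγ : ∀ x : K, x ≠ 0 → ∃ m : ℕ, γ ^ m = x) {n : ℕ} (hn : Fintype.card K = 2 * n + 1)
    (x : K) : x ∈ (Finset.range n).image (fun i => γ ^ (2 * i)) ↔ χ x = 1 := by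
  have hγ0 := gen_ne_zero hK γ hγ
  have hord : γ ^ (2 * n) = 1 := by
    have := FiniteField.pow_card_sub_one_eq_one γ hγ0
    rwa [hn, Nat.add_sub_cancel] at this
  have hnpos : 0 < n := by
    have h2 := Fintype.one_lt_card (α := K)
    omega
  constructor
  · intro hx
    obtain ⟨i, _, rfl⟩ := Finset.mem_image.mp hx
    rw [map_pow, chi_gen hK γ hγ, pow_mul]
    simp
  · intro hx
    have hx0 : x ≠ 0 := by
      intro h; rw [h, quadraticChar_zero] at hx; norm_num at hx
    obtain ⟨m, rfl⟩ := hγ x hx0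
    rw [map_pow, chi_gen hK γ hγ] at hx
    have hme : Even m := by
      rcases Nat.even_or_odd m with h | h
      · exact h
      · rw [h.neg_one_pow] at hx; norm_num at hx
    obtain ⟨i, rfl⟩ := hme
    apply Finset.mem_image.mpr
    refine ⟨i % n, Finset.mem_range.mpr (Nat.mod_lt _ hnpos), ?_⟩
    rw [show i + i = 2 * i by ring, ← Nat.mul_mod_mul_left,
      ← pow_reduce γ hord (2 * i)]

lemma mem_image_odd (hK : ringChar K ≠ 2) (γ : K)
    (hγ : ∀ x : K, x ≠ 0 → ∃ m : ℕ, γ ^ m = x) {n : ℕ} (hn : Fintype.card K = 2 * n + 1)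
    (x : K) : x ∈ (Finset.range n).image (fun i => γ ^ (2 * i + 1)) ↔ χ x = -1 := by
  have hγ0 := gen_ne_zero hK γ hγ
  have hord : γ ^ (2 * n) = 1 := by
    have := FiniteField.pow_card_sub_one_eq_one γ hγ0
    rwa [hn, Nat.add_sub_cancel] at this
  have hnpos : 0 < n := by
    have h2 := Fintype.one_lt_card (α := K)
    omega
  constructor
  · intro hx
    obtain ⟨i, _, rfl⟩ := Finset.mem_image.mp hx
    rw [map_pow, chi_gen hK γ hγ, pow_add, pow_mul]
    simp
  · intro hx
    have hx0 : x ≠ 0 := by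
      intro h; rw [h, quadraticChar_zero] at hx; norm_num at hx
    obtain ⟨m, rfl⟩ := hγ x hx0
    rw [map_pow, chi_gen hK γ hγ] at hx
    have hme : Odd m := by
      rcases Nat.even_or_odd m with h | h
      · rw [h.neg_one_pow] at hx; norm_num at hx
      · exact h
    obtain ⟨i, rfl⟩ := hme
    apply Finset.mem_image.mpr
    refine ⟨i % n, Finset.mem_range.mpr (Nat.mod_lt _ hnpos), ?_⟩
    rw [pow_add, pow_add,
      show 2 * (i % n) = (2 * i) % (2 * n) from (Nat.mul_mod_mul_left 2 i n).symm,
      ← pow_reduce γ hord (2 * i)]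

lemma exists_pow_lt_gen (hK : ringChar K ≠ 2) (γ : K)
    (hγ : ∀ x : K, x ≠ 0 → ∃ m : ℕ, γ ^ m = x) {n : ℕ} (hn : Fintype.card K = 2 * n + 1)
    {x : K} (hx : x ≠ 0) : ∃ i, i < 2 * n ∧ γ ^ i = x := by
  have hγ0 := gen_ne_zero hK γ hγ
  have hord : γ ^ (2 * n) = 1 := by
    have := FiniteField.pow_card_sub_one_eq_one γ hγ0
    rwa [hn, Nat.add_sub_cancel] at this
  have hnpos : 0 < n := by
    have h2 := Fintype.one_lt_card (α := K)
    omega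
  obtain ⟨m, rfl⟩ := hγ x hx
  exact ⟨m % (2 * n), Nat.mod_lt _ (by omega), (pow_reduce γ hord m).symm⟩

end TPPHelpers

theorem twin_prime_power_diffSet_variant
    {F F' : Type*} [Field F] [Fintype F] [DecidableEq F]
    [Field F'] [Fintype F'] [DecidableEq F']
    (q : ℕ) (hodd : Odd q) (hq : Fintype.card F = q) (hq' : Fintype.card F' = q + 2)
    (α : F) (hα : ∀ x : F, x ≠ 0 → ∃ m : ℕ, α ^ m = x)
    (β : F') (hβ : ∀ x : F', x ≠ 0 → ∃ m : ℕ, β ^ m = x)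
    (m : ℕ) (hm : m = (q + 1) ^ 2 / 4)
    (E1' E2' E3 D' : Finset (F × F'))
    (hE1 : E1' = ((Finset.range ((q - 1) / 2)) ×ˢ (Finset.range ((q + 1) / 2))).image
      (fun p => (α ^ (2 * p.1), β ^ (2 * p.2 + 1))))
    (hE2 : E2' = ((Finset.range ((q - 1) / 2)) ×ˢ (Finset.range ((q + 1) / 2))).image
      (fun p => (α ^ (2 * p.1 + 1), β ^ (2 * p.2))))
    (hE3 : E3 = {((0 : F), (0 : F'))} ∪
      (Finset.range (q - 1)).image (fun i => (α ^ i, (0 : F'))))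
    (hD : D' = E1' ∪ E2' ∪ E3) :
    IsAddDiffSet (4 * m - 1) (2 * m - 1) (m - 1) D' := by
  obtain ⟨t, ht⟩ := hodd
  have hF2 : ringChar F ≠ 2 := by
    intro h
    have := FiniteField.even_card_of_char_two h
    rw [hq] at this; omega
  have hF'2 : ringChar F' ≠ 2 := by
    intro h
    have := FiniteField.even_card_of_char_two h
    rw [hq'] at this; omega
  have hcF : Fintype.card F = 2 * t + 1 := by rw [hq]; omega
  have hcF' : Fintype.card F' = 2 * (t + 1) + 1 := by rw [hq']; omega
  have htpos : 1 ≤ t := by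
    have h2 := Fintype.one_lt_card (α := F)
    omega
  have hq1 : (q - 1) / 2 = t := by omega
  have hq2 : (q + 1) / 2 = t + 1 := by omega
  have hm2 : m = t ^ 2 + 2 * t + 1 := by
    rw [hm]
    have h4 : (q + 1) ^ 2 = 4 * (t ^ 2 + 2 * t + 1) := by subst ht; ring
    rw [h4]
    omega
  set χ1 := quadraticChar F with hχ1
  set χ2 := quadraticChar F' with hχ2
  -- membership characterizations
  have hE1mem : ∀ p : F × F', p ∈ E1' ↔ (χ1 p.1 = 1 ∧ χ2 p.2 = -1) := by
    intro p
    rw [hE1, hq1, hq2]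
    constructor
    · intro hp
      obtain ⟨w, hw, hpe⟩ := Finset.mem_image.mp hp
      obtain ⟨hw1, hw2⟩ := Finset.mem_product.mp hw
      subst hpe
      constructor
      · exact (mem_image_even hF2 α hα hcF _).mp
          (Finset.mem_image.mpr ⟨w.1, hw1, rfl⟩)
      · exact (mem_image_odd hF'2 β hβ hcF' _).mp
          (Finset.mem_image.mpr ⟨w.2, hw2, rfl⟩)
    · rintro ⟨h1, h2⟩
      obtain ⟨i, hi, hie⟩ := Finset.mem_image.mp ((mem_image_even hF2 α hα hcF p.1).mpr h1)
      obtain ⟨j, hj, hje⟩ := Finset.mem_image.mp ((mem_image_odd hF'2 β hβ hcF' p.2).mpr h2)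
      exact Finset.mem_image.mpr ⟨(i, j), Finset.mem_product.mpr ⟨hi, hj⟩,
        by rw [show ((i,j).1) = i from rfl, show ((i,j).2) = j from rfl, hie, hje]⟩
  have hE2mem : ∀ p : F × F', p ∈ E2' ↔ (χ1 p.1 = -1 ∧ χ2 p.2 = 1) := by
    intro p
    rw [hE2, hq1, hq2]
    constructor
    · intro hp
      obtain ⟨w, hw, hpe⟩ := Finset.mem_image.mp hp
      obtain ⟨hw1, hw2⟩ := Finset.mem_product.mp hw
      subst hpe
      constructor
      · exact (mem_image_odd hF2 α hα hcF _).mp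
          (Finset.mem_image.mpr ⟨w.1, hw1, rfl⟩)
      · exact (mem_image_even hF'2 β hβ hcF' _).mp
          (Finset.mem_image.mpr ⟨w.2, hw2, rfl⟩)
    · rintro ⟨h1, h2⟩
      obtain ⟨i, hi, hie⟩ := Finset.mem_image.mp ((mem_image_odd hF2 α hα hcF p.1).mpr h1)
      obtain ⟨j, hj, hje⟩ := Finset.mem_image.mp ((mem_image_even hF'2 β hβ hcF' p.2).mpr h2)
      exact Finset.mem_image.mpr ⟨(i, j), Finset.mem_product.mpr ⟨hi, hj⟩,
        by rw [show ((i,j).1) = i from rfl, show ((i,j).2) = j from rfl, hie, hje]⟩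
  have hE3mem : ∀ p : F × F', p ∈ E3 ↔ p.2 = 0 := by
    intro p
    rw [hE3]
    simp only [Finset.mem_union, Finset.mem_singleton, Finset.mem_image, Finset.mem_range]
    constructor
    · rintro (h | ⟨i, _, h⟩)
      · rw [h]
      · rw [← h]
    · intro h
      by_cases hp1 : p.1 = 0
      · left
        exact Prod.ext hp1 h
      · right
        obtain ⟨i, hi, hie⟩ := exists_pow_lt_gen hF2 α hα hcF hp1
        exact ⟨i, by omega, Prod.ext hie h.symm⟩
  have hDmem : ∀ p : F × F', p ∈ D' ↔ (p.2 = 0 ∨ χ1 p.1 * χ2 p.2 = -1) := by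
    intro p
    rw [hD, Finset.mem_union, Finset.mem_union, hE1mem p, hE2mem p, hE3mem p]
    constructor
    · rintro ((⟨h1, h2⟩ | ⟨h1, h2⟩) | h)
      · right; rw [h1, h2]; ring
      · right; rw [h1, h2]; ring
      · left; exact h
    · rintro (h | h)
      · right; exact h
      · left
        have hx0 : p.1 ≠ 0 := by
          intro hc; rw [hχ1] at h; rw [hc, quadraticChar_zero, zero_mul] at h; norm_num at h
        have hy0 : p.2 ≠ 0 := by
          intro hc; rw [hχ2] at h; rw [hc, quadraticChar_zero, mul_zero] at h; norm_num at h
        rcases quadraticChar_dichotomy hx0 with h1 | h1 <;>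
          rcases quadraticChar_dichotomy hy0 with h2 | h2 <;>
          rw [← hχ1] at h1 <;> rw [← hχ2] at h2 <;> rw [h1, h2] at h <;> norm_num at h
        · exact Or.inl ⟨h1, h2⟩
        · exact Or.inr ⟨h1, h2⟩
  -- key indicator identity
  have twoInd : ∀ (x : F) (y : F'),
      (2 : ℤ) * (if (y = 0 ∨ χ1 x * χ2 y = -1) then 1 else 0)
        = aI y + indNZ x * indNZ y - χ1 x * χ2 y := by
    intro x y
    by_cases hy : y = 0
    · subst hy
      simp [aI, indNZ, hχ2]
    · by_cases hx : x = 0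
      · subst hx
        simp [aI, indNZ, hy, hχ1]
      · rcases quadraticChar_dichotomy hx with h1 | h1 <;>
          rcases quadraticChar_dichotomy hy with h2 | h2 <;>
          rw [← hχ1] at h1 <;> rw [← hχ2] at h2 <;>
          simp [aI, indNZ, hx, hy, h1, h2]
  constructor
  · -- cardinality
    have hDfilter : D' = Finset.univ.filter
        (fun p : F × F' => p.2 = 0 ∨ χ1 p.1 * χ2 p.2 = -1) := by
      ext p
      simp [hDmem p]
    have hcardZ : 2 * (D'.card : ℤ)
        = ∑ x : F, ∑ y : F', (aI y + indNZ x * indNZ y - χ1 x * χ2 y) := by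
      rw [hDfilter, Finset.card_filter]
      push_cast
      rw [Finset.mul_sum, Fintype.sum_prod_type]
      exact Finset.sum_congr rfl (fun x _ => Finset.sum_congr rfl (fun y _ => twoInd x y))
    have haI' : ∑ y : F', aI y = 2 := sum_aI_self
    have hind' : ∑ y : F', indNZ y = 2 * t + 2 := by
      rw [sum_indNZ_self, hcF']; push_cast; ring
    have hchi' : ∑ y : F', χ2 y = 0 := quadraticChar_sum_zero hF'2
    have hindF : ∑ x : F, indNZ x = 2 * t := by
      rw [sum_indNZ_self, hcF]; push_cast; ring
    have hchiF : ∑ x : F, χ1 x = 0 := quadraticChar_sum_zero hF2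
    have inner0 : ∀ x : F, ∑ y : F', (aI y + indNZ x * indNZ y - χ1 x * χ2 y)
        = 2 + indNZ x * (2 * t + 2) := by
      intro x
      rw [Finset.sum_sub_distrib, Finset.sum_add_distrib, ← Finset.mul_sum, ← Finset.mul_sum,
        haI', hind', hchi']
      ring
    rw [Finset.sum_congr rfl (fun x _ => inner0 x), Finset.sum_add_distrib,
      ← Finset.sum_mul, hindF, Finset.sum_const, Finset.card_univ, hcF] at hcardZ
    have hcZ : (D'.card : ℤ) = 2 * t ^ 2 + 4 * t + 1 := by
      rw [nsmul_eq_mul] at hcardZ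
      push_cast at hcardZ
      linarith
    have hcN : D'.card = 2 * t ^ 2 + 4 * t + 1 := by exact_mod_cast hcZ
    rw [hcN, hm2]
    have hgen : ∀ u : ℕ, 2 * u + 4 * t + 1 = 2 * (u + 2 * t + 1) - 1 := by
      intro u; omega
    exact hgen (t ^ 2)
  · -- the difference count
    rintro ⟨a, b⟩ hg
    have hab : ¬(a = 0 ∧ b = 0) := by
      rintro ⟨rfl, rfl⟩
      exact hg rfl
    have hbij : ((D' ×ˢ D').filter (fun p => p.1 - p.2 = ((a, b) : F × F'))).card
        = (Finset.univ.filter (fun z : F × F' => z ∈ D' ∧ z + (a, b) ∈ D')).card := by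
      apply Finset.card_bij' (i := fun p _ => p.2) (j := fun z _ => (z + (a, b), z))
      · intro p hp
        simp only [Finset.mem_filter, Finset.mem_product] at hp
        simp only [Finset.mem_filter, Finset.mem_univ, true_and]
        refine ⟨hp.1.2, ?_⟩
        have : p.2 + (a, b) = p.1 := by
          have := hp.2
          rw [sub_eq_iff_eq_add] at this
          rw [this]; abel
        rw [this]
        exact hp.1.1
      · intro z hz
        simp only [Finset.mem_filter, Finset.mem_univ, true_and] at hz
        simp only [Finset.mem_filter, Finset.mem_product]
        exact ⟨⟨hz.2, hz.1⟩, by abel⟩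
      · intro p hp
        simp only [Finset.mem_filter, Finset.mem_product] at hp
        have := hp.2
        rw [sub_eq_iff_eq_add] at this
        rw [Prod.ext_iff]
        constructor
        · rw [this]; simp; abel_nf
        · rfl
      · intro z hz
        rfl
    rw [hbij]
    have hfilter2 : (Finset.univ.filter (fun z : F × F' => z ∈ D' ∧ z + (a, b) ∈ D'))
        = Finset.univ.filter (fun z : F × F' =>
            (z.2 = 0 ∨ χ1 z.1 * χ2 z.2 = -1) ∧
            (z.2 + b = 0 ∨ χ1 (z.1 + a) * χ2 (z.2 + b) = -1)) := by
      apply Finset.filter_congr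
      intro z _
      rw [hDmem z, hDmem (z + (a, b))]
      rfl
    rw [hfilter2]
    set NN := (Finset.univ.filter (fun z : F × F' =>
            (z.2 = 0 ∨ χ1 z.1 * χ2 z.2 = -1) ∧
            (z.2 + b = 0 ∨ χ1 (z.1 + a) * χ2 (z.2 + b) = -1))).card with hNNdef
    -- the key integer identity
    have hcancel : χ1 (-a) * χ2 (-b) = -(χ1 a * χ2 b) := by
      have hsign : χ1 (-1) * χ2 (-1) = -1 := by
        rw [hχ1, hχ2, quadraticChar_neg_one hF2, quadraticChar_neg_one hF'2, hq, hq']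
        have hq4 : q % 4 = 1 ∨ q % 4 = 3 := by omega
        rcases hq4 with h4 | h4
        · rw [ZMod.χ₄_nat_one_mod_four h4, ZMod.χ₄_nat_three_mod_four (by omega : (q+2) % 4 = 3)]
          ring
        · rw [ZMod.χ₄_nat_three_mod_four h4, ZMod.χ₄_nat_one_mod_four (by omega : (q+2) % 4 = 1)]
          ring
      have ha' : (-a : F) = (-1) * a := by ring
      have hb' : (-b : F') = (-1) * b := by ring
      rw [ha', hb', map_mul, map_mul]
      linear_combination (χ1 a * χ2 b) * hsign
    have expand : ∀ (x : F) (y : F'),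
        (aI y + indNZ x * indNZ y - χ1 x * χ2 y)
          * (aI (y + b) + indNZ (x + a) * indNZ (y + b) - χ1 (x + a) * χ2 (y + b))
        = aI y * aI (y + b)
          + indNZ (x + a) * (aI y * indNZ (y + b))
          + χ1 (x + a) * (-(aI y * χ2 (y + b)))
          + indNZ x * (indNZ y * aI (y + b))
          + (indNZ x * indNZ (x + a)) * (indNZ y * indNZ (y + b))
          + (indNZ x * χ1 (x + a)) * (-(indNZ y * χ2 (y + b)))
          + χ1 x * (-(χ2 y * aI (y + b)))
          + (χ1 x * indNZ (x + a)) * (-(χ2 y * indNZ (y + b)))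
          + (χ1 x * χ1 (x + a)) * (χ2 y * χ2 (y + b)) := by
      intro x y
      ring
    have hNZ : 4 * ((NN : ℤ))
        = ∑ x : F, ∑ y : F', (aI y + indNZ x * indNZ y - χ1 x * χ2 y)
            * (aI (y + b) + indNZ (x + a) * indNZ (y + b) - χ1 (x + a) * χ2 (y + b)) := by
      rw [hNNdef, Finset.card_filter]
      push_cast
      rw [Finset.mul_sum, Fintype.sum_prod_type]
      apply Finset.sum_congr rfl
      intro x _
      apply Finset.sum_congr rfl
      intro y _
      rw [← twoInd x y, ← twoInd (x + a) (y + b)]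
      by_cases hP : (y = 0 ∨ χ1 x * χ2 y = -1) <;>
        by_cases hQ : (y + b = 0 ∨ χ1 (x + a) * χ2 (y + b) = -1) <;>
        simp [hP, hQ]
    -- inner sums over F'
    have hs1 : ∑ y : F', aI y * aI (y + b) = 2 * aI b := sum_aI_mul aI b
    have hs2 : ∑ y : F', aI y * indNZ (y + b) = 2 * indNZ b := sum_aI_mul indNZ b
    have hs3 : ∑ y : F', aI y * χ2 (y + b) = 2 * χ2 b := sum_aI_mul (fun y => χ2 y) b
    have hs4 : ∑ y : F', indNZ y * aI (y + b) = 2 * indNZ b := by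
      rw [sum_mul_aI indNZ b]
      simp [indNZ, neg_eq_zero]
    have hs5 : ∑ y : F', indNZ y * indNZ (y + b)
        = 2 * (t : ℤ) + 1 + (if b = 0 then 1 else 0) := by
      rw [sum_indNZ_indNZ, hcF']
      push_cast
      ring
    have hs6 : ∑ y : F', indNZ y * χ2 (y + b) = -χ2 b := sum_indNZ_chi hF'2 b
    have hs7 : ∑ y : F', χ2 y * aI (y + b) = 2 * χ2 (-b) := sum_mul_aI (fun y => χ2 y) b
    have hs8 : ∑ y : F', χ2 y * indNZ (y + b) = -χ2 (-b) := sum_chi_indNZ hF'2 b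
    have hs9 : ∑ y : F', χ2 y * χ2 (y + b)
        = if b = 0 then 2 * (t : ℤ) + 2 else -1 := by
      rw [sum_chi_chi hF'2 b, hcF']
      split_ifs <;> push_cast <;> ring
    have inner : ∀ x : F,
        ∑ y : F', (aI y + indNZ x * indNZ y - χ1 x * χ2 y)
            * (aI (y + b) + indNZ (x + a) * indNZ (y + b) - χ1 (x + a) * χ2 (y + b))
        = 2 * aI b
          + indNZ (x + a) * (2 * indNZ b)
          + -(χ1 (x + a) * (2 * χ2 b))
          + indNZ x * (2 * indNZ b)
          + (indNZ x * indNZ (x + a)) * (2 * (t : ℤ) + 1 + (if b = 0 then 1 else 0))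
          + -((indNZ x * χ1 (x + a)) * (-χ2 b))
          + -(χ1 x * (2 * χ2 (-b)))
          + -((χ1 x * indNZ (x + a)) * (-χ2 (-b)))
          + (χ1 x * χ1 (x + a)) * (if b = 0 then 2 * (t : ℤ) + 2 else -1) := by
      intro x
      rw [Finset.sum_congr rfl (fun y _ => expand x y)]
      simp only [Finset.sum_add_distrib, mul_neg, Finset.sum_neg_distrib, ← Finset.mul_sum]
      rw [hs1, hs2, hs3, hs4, hs5, hs6, hs7, hs8, hs9]
      ring
    rw [Finset.sum_congr rfl (fun x _ => inner x)] at hNZ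
    simp only [Finset.sum_add_distrib, Finset.sum_neg_distrib, ← Finset.sum_mul,
      Finset.sum_const, Finset.card_univ, hcF, nsmul_eq_mul] at hNZ
    rw [sum_indNZ_shift a, sum_indNZ_self, sum_indNZ_indNZ a, sum_indNZ_chi hF2 a,
      sum_chi_indNZ hF2 a, sum_chi_chi hF2 a, sum_chi_shift hF2 a,
      quadraticChar_sum_zero hF2, hcF] at hNZ
    simp only [hχ1, hχ2] at hNZ hcancel
    have hNval : ((NN : ℤ)) = (t : ℤ) ^ 2 + 2 * t := by
      by_cases ha : a = 0
      · have hb : b ≠ 0 := fun hb => hab ⟨ha, hb⟩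
        rw [ha] at hNZ
        simp [aI, indNZ, hb, quadraticChar_zero] at hNZ
        push_cast at hNZ
        have h4 : 4 * ((NN : ℤ)) = 4 * ((t : ℤ) ^ 2 + 2 * t) := by linear_combination hNZ
        linarith
      · by_cases hb : b = 0
        · rw [hb] at hNZ
          simp [aI, indNZ, ha, quadraticChar_zero] at hNZ
          push_cast at hNZ
          have h4 : 4 * ((NN : ℤ)) = 4 * ((t : ℤ) ^ 2 + 2 * t) := by linear_combination hNZ
          linarith
        · simp [aI, indNZ, ha, hb] at hNZ
          push_cast at hNZ
          simp only [quadraticChar_apply] at hcancel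
          have h4 : 4 * ((NN : ℤ)) = 4 * ((t : ℤ) ^ 2 + 2 * t) := by
            linear_combination hNZ - hcancel
          linarith
    have hNnat : NN = t ^ 2 + 2 * t := by exact_mod_cast hNval
    rw [hNnat, hm2]
    omega
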